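/- Let τ > 0, α, F ∈ ℝ, let u : ℝ → ℝ be continuous, and let z : ℝ → ℝ be differentiable with z'(t) = F + α · u(t) for all t in the interval [t₀, t₀ + τ] (i.e. the unknown term of the first-order ultra-local model is constant on this window). Then the algebraic estimator recovers F exactly: F = -(6/τ³) · ∫₀^τ [ (τ - 2σ) · z(t₀ + σ) + α · σ(τ - σ) · u(t₀ + σ) ] dσ. In particular the estimate is independent of the initial condition z(t₀) and is obtained in finite time τ (non-asymptotically). -/

import Mathlib

/-- First-order algebraic estimator of the model-free setting: if the
ultra-local model z' = F + α u holds with F constant on the window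
[t₀, t₀ + τ], then the estimator recovers F exactly, in finite time and
independently of the initial condition z(t₀). -/
theorem first_order_algebraic_estimator_exact
    (τ α F : ℝ) (hτ : 0 < τ) (u z : ℝ → ℝ) (hu : Continuous u) (t₀ : ℝ)
    (hz : ∀ t ∈ Set.Icc t₀ (t₀ + τ), HasDerivAt z (F + α * u t) t) :
    F = -(6 / τ ^ 3) *
      ∫ σ in (0:ℝ)..τ,
        ((τ - 2 * σ) * z (t₀ + σ) + α * σ * (τ - σ) * u (t₀ + σ)) := by
  have huIcc : Set.uIcc (0:ℝ) τ = Set.Icc 0 τ := Set.uIcc_of_le hτ.le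
  have hmem : ∀ σ ∈ Set.uIcc (0:ℝ) τ, t₀ + σ ∈ Set.Icc t₀ (t₀ + τ) := by
    intro σ hσ
    rw [huIcc] at hσ
    exact ⟨by linarith [hσ.1], by linarith [hσ.2]⟩
  -- derivative of the antiderivative
  have hderiv : ∀ σ ∈ Set.uIcc (0:ℝ) τ,
      HasDerivAt (fun σ => σ * (τ - σ) * z (t₀ + σ) - F * (τ * σ ^ 2 / 2 - σ ^ 3 / 3))
        ((τ - 2 * σ) * z (t₀ + σ) + α * σ * (τ - σ) * u (t₀ + σ)) σ := by
    intro σ hσ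
    have hz' : HasDerivAt (fun σ => z (t₀ + σ)) (F + α * u (t₀ + σ)) σ := by
      have := (hz (t₀ + σ) (hmem σ hσ)).comp σ
        ((hasDerivAt_id σ).const_add t₀)
      exact this.congr_deriv (mul_one _)
    have hp : HasDerivAt (fun σ : ℝ => σ * (τ - σ)) (τ - 2 * σ) σ := by
      have := (hasDerivAt_id σ).mul (((hasDerivAt_id σ)).const_sub τ)
      exact this.congr_deriv (by simp [id]; ring)
    have hq : HasDerivAt (fun σ : ℝ => F * (τ * σ ^ 2 / 2 - σ ^ 3 / 3))
        (F * (τ * σ - σ ^ 2)) σ := by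
      have h1 : HasDerivAt (fun σ : ℝ => τ * σ ^ 2 / 2 - σ ^ 3 / 3)
          (τ * σ - σ ^ 2) σ := by
        have h2 := ((hasDerivAt_pow 2 σ).const_mul τ).div_const 2
        have h3 := (hasDerivAt_pow 3 σ).div_const 3
        have := h2.sub h3
        exact this.congr_deriv (by ring)
      simpa using h1.const_mul F
    have := (hp.mul hz').sub hq
    exact this.congr_deriv (by ring)
  have hcont : ContinuousOn z (Set.Icc t₀ (t₀ + τ)) := fun t ht =>
    (hz t ht).continuousAt.continuousWithinAt
  have hInt : IntervalIntegrable
      (fun σ => (τ - 2 * σ) * z (t₀ + σ) + α * σ * (τ - σ) * u (t₀ + σ))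
      MeasureTheory.volume 0 τ := by
    apply ContinuousOn.intervalIntegrable
    apply ContinuousOn.add
    · apply ContinuousOn.mul
      · exact (continuous_const.sub (continuous_const.mul continuous_id)).continuousOn
      · exact hcont.comp (continuous_const.add continuous_id).continuousOn
          (fun σ hσ => hmem σ hσ)
    · exact (Continuous.mul (by continuity) (hu.comp (by continuity))).continuousOn
  have key := intervalIntegral.integral_eq_sub_of_hasDerivAt hderiv hInt
  rw [key]
  have hτ3 : τ ^ 3 ≠ 0 := pow_ne_zero 3 hτ.ne'
  field_simp
  ring
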